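/- Every open leaf of a capped unwinding is a normal sequent. -/

import Mathlib

set_option maxHeartbeats 1000000

/-! ### Syntax of PDL -/

mutual
inductive PDLFormula : Type
  | bot : PDLFormula
  | atom : ℕ → PDLFormula
  | and : PDLFormula → PDLFormula → PDLFormula
  | or : PDLFormula → PDLFormula → PDLFormula
  | imp : PDLFormula → PDLFormula → PDLFormula
  | box : PDLProgram → PDLFormula → PDLFormula
  deriving DecidableEq

inductive PDLProgram : Type
  | atom : ℕ → PDLProgram
  | comp : PDLProgram → PDLProgram → PDLProgram
  | choice : PDLProgram → PDLProgram → PDLProgram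
  | test : PDLFormula → PDLProgram
  | star : PDLProgram → PDLProgram
  deriving DecidableEq
end

/-! ### Semantics of PDL -/

structure PDLModel where
  State : Type
  propI : ℕ → Set State
  progI : ℕ → Set (State × State)

mutual
def PDLFormula.sem (m : PDLModel) : PDLFormula → Set m.State
  | .bot => ∅
  | .atom p => m.propI p
  | .and φ ψ => PDLFormula.sem m φ ∩ PDLFormula.sem m ψ
  | .or φ ψ => PDLFormula.sem m φ ∪ PDLFormula.sem m ψ
  | .imp φ ψ => (PDLFormula.sem m φ)ᶜ ∪ PDLFormula.sem m ψ
  | .box α φ => { s | ∀ t, (s, t) ∈ PDLProgram.sem m α → t ∈ PDLFormula.sem m φ }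

def PDLProgram.sem (m : PDLModel) : PDLProgram → Set (m.State × m.State)
  | .atom a => m.progI a
  | .comp α β => { p | ∃ t, (p.1, t) ∈ PDLProgram.sem m α ∧ (t, p.2) ∈ PDLProgram.sem m β }
  | .choice α β => PDLProgram.sem m α ∪ PDLProgram.sem m β
  | .test φ => { p | p.1 = p.2 ∧ p.1 ∈ PDLFormula.sem m φ }
  | .star α => { p | Relation.ReflTransGen (fun s t => (s, t) ∈ PDLProgram.sem m α) p.1 p.2 }
end

/-! ### Labelled sequents -/

abbrev Label := ℕ

inductive SeqElem : Type
  | rel : Label → ℕ → Label → SeqElem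
  | lab : Label → PDLFormula → SeqElem
  deriving DecidableEq

structure Sequent where
  ant : Finset SeqElem
  suc : Finset SeqElem

def SeqElem.sat (m : PDLModel) (v : Label → m.State) : SeqElem → Prop
  | .rel x a y => (v x, v y) ∈ m.progI a
  | .lab x φ => v x ∈ PDLFormula.sem m φ

def Sequent.valid (S : Sequent) : Prop :=
  ∀ (m : PDLModel) (v : Label → m.State),
    (∀ A ∈ S.ant, A.sat m v) → ∃ B ∈ S.suc, B.sat m v

def Sequent.falsifiedBy (S : Sequent) (m : PDLModel) (v : Label → m.State) : Prop :=
  (∀ A ∈ S.ant, A.sat m v) ∧ ∀ B ∈ S.suc, ¬ B.sat m v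

/-! ### Labels, starred labels, reachability -/

def SeqElem.labels : SeqElem → Finset Label
  | .rel x _ y => {x, y}
  | .lab x _ => {x}

def labs (Γ : Finset SeqElem) : Finset Label := Γ.biUnion SeqElem.labels

def starred (Δ : Finset SeqElem) : Set Label :=
  { x | ∃ α φ, SeqElem.lab x (PDLFormula.box (PDLProgram.star α) φ) ∈ Δ }

def relStep (Γ : Finset SeqElem) (x y : Label) : Prop := ∃ a, SeqElem.rel x a y ∈ Γ

/-- `x` reaches `y` through a (possibly empty) chain of relational atoms of `Γ`. -/
def reaches (Γ : Finset SeqElem) : Label → Label → Prop := Relation.ReflTransGen (relStep Γ)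

/-- A set of relational atoms is acyclic when no label reaches itself via a nonempty chain. -/
def RelAcyclic (Γ : Finset SeqElem) : Prop := ∀ x, ¬ Relation.TransGen (relStep Γ) x x

def Sequent.Acyclic (S : Sequent) : Prop := RelAcyclic S.ant

/-! ### Classification of formulas, normal sequents -/

def PDLFormula.isAtomic : PDLFormula → Prop
  | .bot => True
  | .atom _ => True
  | _ => False

def PDLFormula.isIterated : PDLFormula → Prop
  | .box (.star _) _ => True
  | _ => False

def SeqElem.isRel : SeqElem → Prop
  | .rel _ _ _ => True
  | _ => False

def NormalSeq (S : Sequent) : Prop :=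
  (∀ A ∈ S.ant, A ∉ S.suc) ∧
  (∀ A ∈ S.suc, ∃ x φ, A = SeqElem.lab x φ ∧ (φ.isAtomic ∨ φ.isIterated)) ∧
  (∀ A ∈ S.ant, A.isRel ∨ ∃ x φ, A = SeqElem.lab x φ ∧
      (φ.isAtomic ∨ ∃ a ψ, φ = PDLFormula.box (PDLProgram.atom a) ψ ∧
        ∀ y, SeqElem.rel x a y ∉ S.ant))

/-! ### Test-freeness and subformulas -/

mutual
def PDLFormula.TestFree : PDLFormula → Prop
  | .bot => True
  | .atom _ => True
  | .and φ ψ => PDLFormula.TestFree φ ∧ PDLFormula.TestFree ψ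
  | .or φ ψ => PDLFormula.TestFree φ ∧ PDLFormula.TestFree ψ
  | .imp φ ψ => PDLFormula.TestFree φ ∧ PDLFormula.TestFree ψ
  | .box α φ => PDLProgram.TestFree α ∧ PDLFormula.TestFree φ

def PDLProgram.TestFree : PDLProgram → Prop
  | .atom _ => True
  | .comp α β => PDLProgram.TestFree α ∧ PDLProgram.TestFree β
  | .choice α β => PDLProgram.TestFree α ∧ PDLProgram.TestFree β
  | .test _ => False
  | .star α => PDLProgram.TestFree α
end

def SeqElem.TestFree : SeqElem → Prop
  | .rel _ _ _ => True
  | .lab _ φ => φ.TestFree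

def Sequent.TestFree (S : Sequent) : Prop :=
  (∀ A ∈ S.ant, A.TestFree) ∧ (∀ A ∈ S.suc, A.TestFree)

mutual
inductive Subf : PDLFormula → PDLFormula → Prop
  | refl (φ) : Subf φ φ
  | andl {χ φ ψ} : Subf χ φ → Subf χ (PDLFormula.and φ ψ)
  | andr {χ φ ψ} : Subf χ ψ → Subf χ (PDLFormula.and φ ψ)
  | orl {χ φ ψ} : Subf χ φ → Subf χ (PDLFormula.or φ ψ)
  | orr {χ φ ψ} : Subf χ ψ → Subf χ (PDLFormula.or φ ψ)
  | impl {χ φ ψ} : Subf χ φ → Subf χ (PDLFormula.imp φ ψ)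
  | impr {χ φ ψ} : Subf χ ψ → Subf χ (PDLFormula.imp φ ψ)
  | boxf {χ α φ} : Subf χ φ → Subf χ (PDLFormula.box α φ)
  | boxp {χ α φ} : SubfP χ α → Subf χ (PDLFormula.box α φ)

inductive SubfP : PDLFormula → PDLProgram → Prop
  | compl {χ α β} : SubfP χ α → SubfP χ (PDLProgram.comp α β)
  | compr {χ α β} : SubfP χ β → SubfP χ (PDLProgram.comp α β)
  | choicel {χ α β} : SubfP χ α → SubfP χ (PDLProgram.choice α β)
  | choicer {χ α β} : SubfP χ β → SubfP χ (PDLProgram.choice α β)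
  | test {χ φ} : Subf χ φ → SubfP χ (PDLProgram.test φ)
  | star {χ α} : SubfP χ α → SubfP χ (PDLProgram.star α)
end

/-! ### Label substitution -/

def substLabel (x y z : Label) : Label := if z = x then y else z

def SeqElem.subst (x y : Label) : SeqElem → SeqElem
  | .rel z a w => .rel (substLabel x y z) a (substLabel x y w)
  | .lab z φ => .lab (substLabel x y z) φ
/-! ### Trace values -/

structure TraceValue where
  label : Label
  spine : List PDLProgram
  focus : PDLProgram
  formula : PDLFormula
  deriving DecidableEq

/-- The labelled formula `x : [α₁]…[αₙ][β*]φ` denoted by a trace value. -/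
def TraceValue.toFormula (τ : TraceValue) : PDLFormula :=
  τ.spine.foldr PDLFormula.box (PDLFormula.box (PDLProgram.star τ.focus) τ.formula)

def TraceValue.toElem (τ : TraceValue) : SeqElem := SeqElem.lab τ.label τ.toFormula

/-- `[γ]τ`: prepend a program to the spine of a trace value. -/
def TraceValue.push (γ : PDLProgram) (τ : TraceValue) : TraceValue :=
  ⟨τ.label, γ :: τ.spine, τ.focus, τ.formula⟩

/-! ### Rule applications of G3PDL -/

inductive RuleApp : Type
  | ax (A : SeqElem)
  | botL (x : Label)
  | wl (A : SeqElem) (Γ Δ : Finset SeqElem)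
  | wr (A : SeqElem) (Γ Δ : Finset SeqElem)
  | andL (x : Label) (φ ψ : PDLFormula) (Γ Δ : Finset SeqElem)
  | andR (x : Label) (φ ψ : PDLFormula) (Γ Δ : Finset SeqElem)
  | orL (x : Label) (φ ψ : PDLFormula) (Γ Δ : Finset SeqElem)
  | orR (x : Label) (φ ψ : PDLFormula) (Γ Δ : Finset SeqElem)
  | impL (x : Label) (φ ψ : PDLFormula) (Γ Δ : Finset SeqElem)
  | impR (x : Label) (φ ψ : PDLFormula) (Γ Δ : Finset SeqElem)
  | boxL (x : Label) (a : ℕ) (y : Label) (φ : PDLFormula) (Γ Δ : Finset SeqElem)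
  | boxR (x : Label) (a : ℕ) (y : Label) (φ : PDLFormula) (Γ Δ : Finset SeqElem)
  | compL (x : Label) (α β : PDLProgram) (φ : PDLFormula) (Γ Δ : Finset SeqElem)
  | compR (x : Label) (α β : PDLProgram) (φ : PDLFormula) (Γ Δ : Finset SeqElem)
  | choiceL (x : Label) (α β : PDLProgram) (φ : PDLFormula) (Γ Δ : Finset SeqElem)
  | choiceR (x : Label) (α β : PDLProgram) (φ : PDLFormula) (Γ Δ : Finset SeqElem)
  | testL (x : Label) (φ ψ : PDLFormula) (Γ Δ : Finset SeqElem)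
  | testR (x : Label) (φ ψ : PDLFormula) (Γ Δ : Finset SeqElem)
  | starL (x : Label) (α : PDLProgram) (φ : PDLFormula) (Γ Δ : Finset SeqElem)
  | starR (x : Label) (α : PDLProgram) (φ : PDLFormula) (Γ Δ : Finset SeqElem)
  | subst (x y : Label) (Γ Δ : Finset SeqElem)
  | cut (A : SeqElem) (Γ Δ Γ₂ Δ₂ : Finset SeqElem)
  deriving DecidableEq

namespace RuleApp

/-- Conclusion of a rule application. -/
def conc : RuleApp → Sequent
  | ax A => ⟨{A}, {A}⟩
  | botL x => ⟨{SeqElem.lab x PDLFormula.bot}, ∅⟩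
  | wl A Γ Δ => ⟨insert A Γ, Δ⟩
  | wr A Γ Δ => ⟨Γ, insert A Δ⟩
  | andL x φ ψ Γ Δ => ⟨insert (SeqElem.lab x (PDLFormula.and φ ψ)) Γ, Δ⟩
  | andR x φ ψ Γ Δ => ⟨Γ, insert (SeqElem.lab x (PDLFormula.and φ ψ)) Δ⟩
  | orL x φ ψ Γ Δ => ⟨insert (SeqElem.lab x (PDLFormula.or φ ψ)) Γ, Δ⟩
  | orR x φ ψ Γ Δ => ⟨Γ, insert (SeqElem.lab x (PDLFormula.or φ ψ)) Δ⟩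
  | impL x φ ψ Γ Δ => ⟨insert (SeqElem.lab x (PDLFormula.imp φ ψ)) Γ, Δ⟩
  | impR x φ ψ Γ Δ => ⟨Γ, insert (SeqElem.lab x (PDLFormula.imp φ ψ)) Δ⟩
  | boxL x a y φ Γ Δ =>
      ⟨insert (SeqElem.lab x (PDLFormula.box (PDLProgram.atom a) φ)) (insert (SeqElem.rel x a y) Γ), Δ⟩
  | boxR x a _ φ Γ Δ => ⟨Γ, insert (SeqElem.lab x (PDLFormula.box (PDLProgram.atom a) φ)) Δ⟩
  | compL x α β φ Γ Δ => ⟨insert (SeqElem.lab x (PDLFormula.box (PDLProgram.comp α β) φ)) Γ, Δ⟩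
  | compR x α β φ Γ Δ => ⟨Γ, insert (SeqElem.lab x (PDLFormula.box (PDLProgram.comp α β) φ)) Δ⟩
  | choiceL x α β φ Γ Δ => ⟨insert (SeqElem.lab x (PDLFormula.box (PDLProgram.choice α β) φ)) Γ, Δ⟩
  | choiceR x α β φ Γ Δ => ⟨Γ, insert (SeqElem.lab x (PDLFormula.box (PDLProgram.choice α β) φ)) Δ⟩
  | testL x φ ψ Γ Δ => ⟨insert (SeqElem.lab x (PDLFormula.box (PDLProgram.test φ) ψ)) Γ, Δ⟩
  | testR x φ ψ Γ Δ => ⟨Γ, insert (SeqElem.lab x (PDLFormula.box (PDLProgram.test φ) ψ)) Δ⟩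
  | starL x α φ Γ Δ => ⟨insert (SeqElem.lab x (PDLFormula.box (PDLProgram.star α) φ)) Γ, Δ⟩
  | starR x α φ Γ Δ => ⟨Γ, insert (SeqElem.lab x (PDLFormula.box (PDLProgram.star α) φ)) Δ⟩
  | subst x y Γ Δ => ⟨Γ.image (SeqElem.subst x y), Δ.image (SeqElem.subst x y)⟩
  | cut _ Γ Δ Γ₂ Δ₂ => ⟨Γ ∪ Γ₂, Δ ∪ Δ₂⟩

/-- Premises of a rule application. -/
def prems : RuleApp → List Sequent
  | ax _ => []
  | botL _ => []
  | wl _ Γ Δ => [⟨Γ, Δ⟩]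
  | wr _ Γ Δ => [⟨Γ, Δ⟩]
  | andL x φ ψ Γ Δ => [⟨insert (SeqElem.lab x φ) (insert (SeqElem.lab x ψ) Γ), Δ⟩]
  | andR x φ ψ Γ Δ => [⟨Γ, insert (SeqElem.lab x φ) Δ⟩, ⟨Γ, insert (SeqElem.lab x ψ) Δ⟩]
  | orL x φ ψ Γ Δ => [⟨insert (SeqElem.lab x φ) Γ, Δ⟩, ⟨insert (SeqElem.lab x ψ) Γ, Δ⟩]
  | orR x φ ψ Γ Δ => [⟨Γ, insert (SeqElem.lab x φ) (insert (SeqElem.lab x ψ) Δ)⟩]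
  | impL x φ ψ Γ Δ => [⟨Γ, insert (SeqElem.lab x φ) Δ⟩, ⟨insert (SeqElem.lab x ψ) Γ, Δ⟩]
  | impR x φ ψ Γ Δ => [⟨insert (SeqElem.lab x φ) Γ, insert (SeqElem.lab x ψ) Δ⟩]
  | boxL _ _ y φ Γ Δ => [⟨insert (SeqElem.lab y φ) Γ, Δ⟩]
  | boxR x a y φ Γ Δ => [⟨insert (SeqElem.rel x a y) Γ, insert (SeqElem.lab y φ) Δ⟩]
  | compL x α β φ Γ Δ => [⟨insert (SeqElem.lab x (PDLFormula.box α (PDLFormula.box β φ))) Γ, Δ⟩]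
  | compR x α β φ Γ Δ => [⟨Γ, insert (SeqElem.lab x (PDLFormula.box α (PDLFormula.box β φ))) Δ⟩]
  | choiceL x α β φ Γ Δ =>
      [⟨insert (SeqElem.lab x (PDLFormula.box α φ)) (insert (SeqElem.lab x (PDLFormula.box β φ)) Γ), Δ⟩]
  | choiceR x α β φ Γ Δ =>
      [⟨Γ, insert (SeqElem.lab x (PDLFormula.box α φ)) Δ⟩, ⟨Γ, insert (SeqElem.lab x (PDLFormula.box β φ)) Δ⟩]
  | testL x φ ψ Γ Δ => [⟨Γ, insert (SeqElem.lab x φ) Δ⟩, ⟨insert (SeqElem.lab x ψ) Γ, Δ⟩]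
  | testR x φ ψ Γ Δ => [⟨insert (SeqElem.lab x φ) Γ, insert (SeqElem.lab x ψ) Δ⟩]
  | starL x α φ Γ Δ =>
      [⟨insert (SeqElem.lab x φ)
          (insert (SeqElem.lab x (PDLFormula.box α (PDLFormula.box (PDLProgram.star α) φ))) Γ), Δ⟩]
  | starR x α φ Γ Δ =>
      [⟨Γ, insert (SeqElem.lab x φ) Δ⟩,
       ⟨Γ, insert (SeqElem.lab x (PDLFormula.box α (PDLFormula.box (PDLProgram.star α) φ))) Δ⟩]
  | subst _ _ Γ Δ => [⟨Γ, Δ⟩]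
  | cut A Γ Δ Γ₂ Δ₂ => [⟨Γ, insert A Δ⟩, ⟨insert A Γ₂, Δ₂⟩]

/-- Side conditions: the fresh-label condition of (□R). -/
def wf : RuleApp → Prop
  | boxR x _ y _ Γ Δ => y ∉ labs Γ ∧ y ∉ labs Δ ∧ y ≠ x
  | _ => True

/-- `(τ, τ')` is a trace pair for (conclusion, `i`-th premise) of the rule application. -/
def tracePair : RuleApp → ℕ → TraceValue → TraceValue → Prop
  | ax _, _, _, _ => False
  | botL _, _, _, _ => False
  | wl _ _ Δ, i, τ, τ' => i = 0 ∧ τ.toElem ∈ Δ ∧ τ' = τ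
  | wr _ _ Δ, i, τ, τ' => i = 0 ∧ τ.toElem ∈ Δ ∧ τ' = τ
  | andL _ _ _ _ Δ, i, τ, τ' => i = 0 ∧ τ.toElem ∈ Δ ∧ τ' = τ
  | andR _ _ _ _ Δ, i, τ, τ' => i < 2 ∧ τ.toElem ∈ Δ ∧ τ' = τ
  | orL _ _ _ _ Δ, i, τ, τ' => i < 2 ∧ τ.toElem ∈ Δ ∧ τ' = τ
  | orR _ _ _ _ Δ, i, τ, τ' => i = 0 ∧ τ.toElem ∈ Δ ∧ τ' = τ
  | impL _ _ _ _ Δ, i, τ, τ' => i < 2 ∧ τ.toElem ∈ Δ ∧ τ' = τ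
  | impR _ _ _ _ Δ, i, τ, τ' => i = 0 ∧ τ.toElem ∈ Δ ∧ τ' = τ
  | boxL _ _ _ _ _ Δ, i, τ, τ' => i = 0 ∧ τ.toElem ∈ Δ ∧ τ' = τ
  | boxR x a y φ _ Δ, i, τ, τ' => i = 0 ∧
      ((τ.toElem ∈ Δ ∧ τ' = τ) ∨
       (τ'.toElem = SeqElem.lab y φ ∧
        τ = ⟨x, PDLProgram.atom a :: τ'.spine, τ'.focus, τ'.formula⟩))
  | compL _ _ _ _ _ Δ, i, τ, τ' => i = 0 ∧ τ.toElem ∈ Δ ∧ τ' = τ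
  | compR x α β φ _ Δ, i, τ, τ' => i = 0 ∧
      ((τ.toElem ∈ Δ ∧ τ' = τ) ∨
       (∃ σ : TraceValue, σ.toElem = SeqElem.lab x φ ∧
          τ = σ.push (PDLProgram.comp α β) ∧ τ' = (σ.push β).push α))
  | choiceL _ _ _ _ _ Δ, i, τ, τ' => i = 0 ∧ τ.toElem ∈ Δ ∧ τ' = τ
  | choiceR x α β φ _ Δ, i, τ, τ' => i < 2 ∧
      ((τ.toElem ∈ Δ ∧ τ' = τ) ∨
       (∃ σ : TraceValue, σ.toElem = SeqElem.lab x φ ∧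
          τ = σ.push (PDLProgram.choice α β) ∧ τ' = σ.push (if i = 0 then α else β)))
  | testL _ _ _ _ Δ, i, τ, τ' => i < 2 ∧ τ.toElem ∈ Δ ∧ τ' = τ
  | testR x φ ψ _ Δ, i, τ, τ' => i = 0 ∧
      ((τ.toElem ∈ Δ ∧ τ' = τ) ∨
       (τ'.toElem = SeqElem.lab x ψ ∧ τ = τ'.push (PDLProgram.test φ)))
  | starL _ _ _ _ Δ, i, τ, τ' => i = 0 ∧ τ.toElem ∈ Δ ∧ τ' = τ
  | starR x α φ _ Δ, i, τ, τ' =>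
      (i = 0 ∧ ((τ.toElem ∈ Δ ∧ τ' = τ) ∨
         (τ'.toElem = SeqElem.lab x φ ∧ τ = τ'.push (PDLProgram.star α)))) ∨
      (i = 1 ∧ ((τ.toElem ∈ Δ ∧ τ' = τ) ∨
         (τ.toElem = SeqElem.lab x (PDLFormula.box (PDLProgram.star α) φ) ∧ τ' = τ.push α)))
  | subst x y _ Δ, i, τ, τ' => i = 0 ∧ τ'.toElem ∈ Δ ∧
      τ = ⟨substLabel x y τ'.label, τ'.spine, τ'.focus, τ'.formula⟩
  | cut _ _ Δ _ Δ₂, i, τ, τ' =>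
      (i = 0 ∧ τ.toElem ∈ Δ ∧ τ' = τ) ∨ (i = 1 ∧ τ.toElem ∈ Δ₂ ∧ τ' = τ)

/-- Progressing trace pairs: the principal formula of a (∗R) right premise with empty spine. -/
def progressing : RuleApp → ℕ → TraceValue → TraceValue → Prop
  | starR x α φ _ _, i, τ, τ' => i = 1 ∧ τ = ⟨x, [], α, φ⟩ ∧ τ' = τ.push α
  | _, _, _, _ => False

/-! #### Classification of rule applications -/

def isCut : RuleApp → Prop | cut _ _ _ _ _ => True | _ => False
def isSubst : RuleApp → Prop | subst _ _ _ _ => True | _ => False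
def isWeak : RuleApp → Prop | wl _ _ _ => True | wr _ _ _ => True | _ => False

/-- Rules allowed when closing a leaf: weakenings, (Ax) and (⊥). -/
def isClosing : RuleApp → Prop
  | wl _ _ _ => True | wr _ _ _ => True | ax _ => True | botL _ => True | _ => False

/-- The logical rules: all rules except weakening, (Subst) and (Cut). -/
def isLogical : RuleApp → Prop
  | wl _ _ _ => False | wr _ _ _ => False | subst _ _ _ _ => False | cut _ _ _ _ _ => False
  | _ => True

/-- The left logical rules. -/
def isLeftLogical : RuleApp → Prop
  | andL _ _ _ _ _ => True | orL _ _ _ _ _ => True | impL _ _ _ _ _ => True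
  | boxL _ _ _ _ _ _ => True | compL _ _ _ _ _ _ => True | choiceL _ _ _ _ _ _ => True
  | testL _ _ _ _ _ => True | starL _ _ _ _ _ => True
  | _ => False

/-- The rule instance consumes its principal labelled formula (it does not also occur in the
context), and (for □L) preserves the relational atom. -/
def consumes : RuleApp → Prop
  | andL x φ ψ Γ _ => SeqElem.lab x (PDLFormula.and φ ψ) ∉ Γ
  | andR x φ ψ _ Δ => SeqElem.lab x (PDLFormula.and φ ψ) ∉ Δ
  | orL x φ ψ Γ _ => SeqElem.lab x (PDLFormula.or φ ψ) ∉ Γ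
  | orR x φ ψ _ Δ => SeqElem.lab x (PDLFormula.or φ ψ) ∉ Δ
  | impL x φ ψ Γ _ => SeqElem.lab x (PDLFormula.imp φ ψ) ∉ Γ
  | impR x φ ψ _ Δ => SeqElem.lab x (PDLFormula.imp φ ψ) ∉ Δ
  | boxL x a y φ Γ _ =>
      SeqElem.lab x (PDLFormula.box (PDLProgram.atom a) φ) ∉ Γ ∧ SeqElem.rel x a y ∈ Γ
  | boxR x a _ φ _ Δ => SeqElem.lab x (PDLFormula.box (PDLProgram.atom a) φ) ∉ Δ
  | compL x α β φ Γ _ => SeqElem.lab x (PDLFormula.box (PDLProgram.comp α β) φ) ∉ Γ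
  | compR x α β φ _ Δ => SeqElem.lab x (PDLFormula.box (PDLProgram.comp α β) φ) ∉ Δ
  | choiceL x α β φ Γ _ => SeqElem.lab x (PDLFormula.box (PDLProgram.choice α β) φ) ∉ Γ
  | choiceR x α β φ _ Δ => SeqElem.lab x (PDLFormula.box (PDLProgram.choice α β) φ) ∉ Δ
  | testL x φ ψ Γ _ => SeqElem.lab x (PDLFormula.box (PDLProgram.test φ) ψ) ∉ Γ
  | testR x φ ψ _ Δ => SeqElem.lab x (PDLFormula.box (PDLProgram.test φ) ψ) ∉ Δ
  | starL x α φ Γ _ => SeqElem.lab x (PDLFormula.box (PDLProgram.star α) φ) ∉ Γ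
  | starR x α φ _ Δ => SeqElem.lab x (PDLFormula.box (PDLProgram.star α) φ) ∉ Δ
  | _ => True

/-- `B` (in the antecedent of the `i`-th premise) is an immediate ancestor of `A`
(in the antecedent of the conclusion). -/
def antAncestor : RuleApp → ℕ → SeqElem → SeqElem → Prop
  | ax _, _, _, _ => False
  | botL _, _, _, _ => False
  | wl _ Γ _, i, A, B => i = 0 ∧ A ∈ Γ ∧ B = A
  | wr _ Γ _, i, A, B => i = 0 ∧ A ∈ Γ ∧ B = A
  | andL x φ ψ Γ _, i, A, B => i = 0 ∧
      ((A ∈ Γ ∧ B = A) ∨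
       (A = SeqElem.lab x (PDLFormula.and φ ψ) ∧ (B = SeqElem.lab x φ ∨ B = SeqElem.lab x ψ)))
  | andR _ _ _ Γ _, i, A, B => i < 2 ∧ A ∈ Γ ∧ B = A
  | orL x φ ψ Γ _, i, A, B => i < 2 ∧
      ((A ∈ Γ ∧ B = A) ∨
       (A = SeqElem.lab x (PDLFormula.or φ ψ) ∧ B = SeqElem.lab x (if i = 0 then φ else ψ)))
  | orR _ _ _ Γ _, i, A, B => i = 0 ∧ A ∈ Γ ∧ B = A
  | impL x φ ψ Γ _, i, A, B =>
      (i = 0 ∧ A ∈ Γ ∧ B = A) ∨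
      (i = 1 ∧ ((A ∈ Γ ∧ B = A) ∨
        (A = SeqElem.lab x (PDLFormula.imp φ ψ) ∧ B = SeqElem.lab x ψ)))
  | impR _ _ _ Γ _, i, A, B => i = 0 ∧ A ∈ Γ ∧ B = A
  | boxL x a y φ Γ _, i, A, B => i = 0 ∧
      ((A ∈ Γ ∧ B = A) ∨
       (A = SeqElem.lab x (PDLFormula.box (PDLProgram.atom a) φ) ∧ B = SeqElem.lab y φ))
  | boxR _ _ _ _ Γ _, i, A, B => i = 0 ∧ A ∈ Γ ∧ B = A
  | compL x α β φ Γ _, i, A, B => i = 0 ∧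
      ((A ∈ Γ ∧ B = A) ∨
       (A = SeqElem.lab x (PDLFormula.box (PDLProgram.comp α β) φ) ∧
        B = SeqElem.lab x (PDLFormula.box α (PDLFormula.box β φ))))
  | compR _ _ _ _ Γ _, i, A, B => i = 0 ∧ A ∈ Γ ∧ B = A
  | choiceL x α β φ Γ _, i, A, B => i = 0 ∧
      ((A ∈ Γ ∧ B = A) ∨
       (A = SeqElem.lab x (PDLFormula.box (PDLProgram.choice α β) φ) ∧
        (B = SeqElem.lab x (PDLFormula.box α φ) ∨ B = SeqElem.lab x (PDLFormula.box β φ))))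
  | choiceR _ _ _ _ Γ _, i, A, B => i < 2 ∧ A ∈ Γ ∧ B = A
  | testL x φ ψ Γ _, i, A, B =>
      (i = 0 ∧ A ∈ Γ ∧ B = A) ∨
      (i = 1 ∧ ((A ∈ Γ ∧ B = A) ∨
        (A = SeqElem.lab x (PDLFormula.box (PDLProgram.test φ) ψ) ∧ B = SeqElem.lab x ψ)))
  | testR _ _ _ Γ _, i, A, B => i = 0 ∧ A ∈ Γ ∧ B = A
  | starL x α φ Γ _, i, A, B => i = 0 ∧
      ((A ∈ Γ ∧ B = A) ∨
       (A = SeqElem.lab x (PDLFormula.box (PDLProgram.star α) φ) ∧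
        (B = SeqElem.lab x φ ∨
         B = SeqElem.lab x (PDLFormula.box α (PDLFormula.box (PDLProgram.star α) φ)))))
  | starR _ _ _ Γ _, i, A, B => i < 2 ∧ A ∈ Γ ∧ B = A
  | subst x y Γ _, i, A, B => i = 0 ∧ B ∈ Γ ∧ A = B.subst x y
  | cut _ Γ _ Γ₂ _, i, A, B =>
      (i = 0 ∧ A ∈ Γ ∧ B = A) ∨ (i = 1 ∧ A ∈ Γ₂ ∧ B = A)

/-- `B` (in the consequent of the `i`-th premise) is an immediate ancestor of `A`
(in the consequent of the conclusion). -/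
def sucAncestor : RuleApp → ℕ → SeqElem → SeqElem → Prop
  | ax _, _, _, _ => False
  | botL _, _, _, _ => False
  | wl _ _ Δ, i, A, B => i = 0 ∧ A ∈ Δ ∧ B = A
  | wr _ _ Δ, i, A, B => i = 0 ∧ A ∈ Δ ∧ B = A
  | andL _ _ _ _ Δ, i, A, B => i = 0 ∧ A ∈ Δ ∧ B = A
  | andR x φ ψ _ Δ, i, A, B => i < 2 ∧
      ((A ∈ Δ ∧ B = A) ∨
       (A = SeqElem.lab x (PDLFormula.and φ ψ) ∧ B = SeqElem.lab x (if i = 0 then φ else ψ)))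
  | orL _ _ _ _ Δ, i, A, B => i < 2 ∧ A ∈ Δ ∧ B = A
  | orR x φ ψ _ Δ, i, A, B => i = 0 ∧
      ((A ∈ Δ ∧ B = A) ∨
       (A = SeqElem.lab x (PDLFormula.or φ ψ) ∧ (B = SeqElem.lab x φ ∨ B = SeqElem.lab x ψ)))
  | impL _ _ _ _ Δ, i, A, B => i < 2 ∧ A ∈ Δ ∧ B = A
  | impR x φ ψ _ Δ, i, A, B => i = 0 ∧
      ((A ∈ Δ ∧ B = A) ∨ (A = SeqElem.lab x (PDLFormula.imp φ ψ) ∧ B = SeqElem.lab x ψ))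
  | boxL _ _ _ _ _ Δ, i, A, B => i = 0 ∧ A ∈ Δ ∧ B = A
  | boxR x a y φ _ Δ, i, A, B => i = 0 ∧
      ((A ∈ Δ ∧ B = A) ∨
       (A = SeqElem.lab x (PDLFormula.box (PDLProgram.atom a) φ) ∧ B = SeqElem.lab y φ))
  | compL _ _ _ _ _ Δ, i, A, B => i = 0 ∧ A ∈ Δ ∧ B = A
  | compR x α β φ _ Δ, i, A, B => i = 0 ∧
      ((A ∈ Δ ∧ B = A) ∨
       (A = SeqElem.lab x (PDLFormula.box (PDLProgram.comp α β) φ) ∧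
        B = SeqElem.lab x (PDLFormula.box α (PDLFormula.box β φ))))
  | choiceL _ _ _ _ _ Δ, i, A, B => i = 0 ∧ A ∈ Δ ∧ B = A
  | choiceR x α β φ _ Δ, i, A, B => i < 2 ∧
      ((A ∈ Δ ∧ B = A) ∨
       (A = SeqElem.lab x (PDLFormula.box (PDLProgram.choice α β) φ) ∧
        B = SeqElem.lab x (PDLFormula.box (if i = 0 then α else β) φ)))
  | testL _ _ _ _ Δ, i, A, B => i < 2 ∧ A ∈ Δ ∧ B = A
  | testR x φ ψ _ Δ, i, A, B => i = 0 ∧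
      ((A ∈ Δ ∧ B = A) ∨
       (A = SeqElem.lab x (PDLFormula.box (PDLProgram.test φ) ψ) ∧ B = SeqElem.lab x ψ))
  | starL _ _ _ _ Δ, i, A, B => i = 0 ∧ A ∈ Δ ∧ B = A
  | starR x α φ _ Δ, i, A, B => i < 2 ∧
      ((A ∈ Δ ∧ B = A) ∨
       (A = SeqElem.lab x (PDLFormula.box (PDLProgram.star α) φ) ∧
        B = SeqElem.lab x (if i = 0 then φ
              else PDLFormula.box α (PDLFormula.box (PDLProgram.star α) φ))))
  | subst x y _ Δ, i, A, B => i = 0 ∧ B ∈ Δ ∧ A = B.subst x y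
  | cut _ _ Δ _ Δ₂, i, A, B =>
      (i = 0 ∧ A ∈ Δ ∧ B = A) ∨ (i = 1 ∧ A ∈ Δ₂ ∧ B = A)

end RuleApp
/-! ### Derivations: possibly infinite trees of rule applications, with open leaves -/

/-- A node of a derivation: either a rule application, or an open leaf with its sequent. -/
abbrev DNode := Sum RuleApp Sequent

def DNode.concl : DNode → Sequent := Sum.elim RuleApp.conc id

/-- A (possibly infinite, possibly open) derivation, presented as an assignment of nodes to
the addresses (lists of child indices) of an infinitely-branching tree. -/
structure Deriv where
  node : List ℕ → Option DNode
  wf_rule : ∀ p r, node p = some (Sum.inl r) → r.wf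
  children : ∀ p r, node p = some (Sum.inl r) →
      ∀ i, (node (p ++ [i])).map DNode.concl = r.prems[i]?
  leaf_no_children : ∀ p S, node p = some (Sum.inr S) → ∀ i, node (p ++ [i]) = none
  tree_closed : ∀ p i, node p = none → node (p ++ [i]) = none

namespace Deriv

def ruleAt (D : Deriv) (p : List ℕ) : Option RuleApp :=
  match D.node p with
  | some (Sum.inl r) => some r
  | _ => none

def openAt (D : Deriv) (p : List ℕ) : Option Sequent :=
  match D.node p with
  | some (Sum.inr S) => some S
  | _ => none

def seqAt (D : Deriv) (p : List ℕ) : Option Sequent := (D.node p).map DNode.concl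

def Finite (D : Deriv) : Prop := { p | (D.node p).isSome }.Finite

def NoOpen (D : Deriv) : Prop := ∀ p S, D.node p ≠ some (Sum.inr S)

end Deriv

/-! ### Infinite paths, traces and the global trace condition -/

/-- The address of the `n`-th node on the infinite branch determined by the sequence `f` of
child indices. -/
def pathAddr (f : ℕ → ℕ) (n : ℕ) : List ℕ := (List.range n).map f

/-- `f` determines an infinite path in the derivation tree whose rules are given by `R`. -/
def IsInfPath (R : List ℕ → Option RuleApp) (f : ℕ → ℕ) : Prop :=
  ∀ n, (R (pathAddr f n)).isSome

/-- The infinite path determined by `f` is followed (from some point `N` on) by an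
infinitely progressing trace. -/
def FollowedByProgTrace (R : List ℕ → Option RuleApp) (f : ℕ → ℕ) : Prop :=
  ∃ (N : ℕ) (g : ℕ → TraceValue),
    (∀ k, ∃ r, R (pathAddr f (N + k)) = some r ∧
        RuleApp.tracePair r (f (N + k)) (g k) (g (k + 1))) ∧
    (∀ m, ∃ k, m ≤ k ∧ ∃ r, R (pathAddr f (N + k)) = some r ∧
        RuleApp.progressing r (f (N + k)) (g k) (g (k + 1)))

/-- The global trace condition. -/
def GTC (R : List ℕ → Option RuleApp) : Prop :=
  ∀ f, IsInfPath R f → FollowedByProgTrace R f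

/-- A `G3PDL∞` proof of `S`: a pre-proof (derivation without open leaves) whose root sequent is
`S` and which satisfies the global trace condition. -/
def Deriv.IsProofOf (D : Deriv) (S : Sequent) : Prop :=
  D.seqAt [] = some S ∧ D.NoOpen ∧ GTC D.ruleAt

/-! ### Finite traces along finite paths in a derivation -/

/-- `tr` is a trace covering the path from the node at address `base` to the node at address
`base ++ tail`. -/
def CoversFrom (D : Deriv) (base tail : List ℕ) (tr : List TraceValue) : Prop :=
  tr.length = tail.length + 1 ∧
  ∀ i r j τ τ', D.ruleAt (base ++ tail.take i) = some r → tail[i]? = some j →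
    tr[i]? = some τ → tr[i + 1]? = some τ' → RuleApp.tracePair r j τ τ'

/-- The trace `tr` covering the path from `base` along `tail` progresses at position `i`. -/
def ProgAtFrom (D : Deriv) (base tail : List ℕ) (tr : List TraceValue) (i : ℕ) : Prop :=
  ∃ r j τ τ', D.ruleAt (base ++ tail.take i) = some r ∧ tail[i]? = some j ∧
    tr[i]? = some τ ∧ tr[i + 1]? = some τ' ∧ RuleApp.progressing r j τ τ'

/-! ### Cyclic derivations and their unfoldings -/

/-- Dereference an address: at an ordinary node stay put, at a bud jump to its companion. -/
def Deriv.deref (D : Deriv) (c : List ℕ → Option (List ℕ)) (p : List ℕ) : Option (List ℕ) :=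
  match D.node p with
  | some (Sum.inl _) => some p
  | some (Sum.inr _) => c p
  | none => none

/-- The address (in the finite tree) of the node corresponding to the address `p` of the
infinite unfolding. -/
def Deriv.unfoldAddr (D : Deriv) (c : List ℕ → Option (List ℕ)) (p : List ℕ) :
    Option (List ℕ) :=
  p.foldl (fun q i => q.bind fun q' => D.deref c (q' ++ [i])) (D.deref c [])

/-- The rule applied at address `p` of the infinite unfolding of the cyclic derivation. -/
def Deriv.unfoldRule (D : Deriv) (c : List ℕ → Option (List ℕ)) (p : List ℕ) :
    Option RuleApp :=
  (D.unfoldAddr c p).bind fun q => D.ruleAt q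

/-- Each bud assigned a companion must be assigned an internal node carrying a syntactically
identical sequent. -/
def CompanionCond (D : Deriv) (c : List ℕ → Option (List ℕ)) : Prop :=
  ∀ p S, D.node p = some (Sum.inr S) →
    ∀ q, c p = some q → ∃ r, D.node q = some (Sum.inl r) ∧ RuleApp.conc r = S

/-- Every bud is assigned a companion. -/
def FullCompanion (D : Deriv) (c : List ℕ → Option (List ℕ)) : Prop :=
  ∀ p S, D.node p = some (Sum.inr S) → ∃ q, c p = some q

/-- `S` is derivable in the cyclic system `G3PDLω`: there is a finite derivation tree, with each
bud assigned a companion, whose infinite unfolding satisfies the global trace condition. -/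
def CyclicDerivable (S : Sequent) : Prop :=
  ∃ (D : Deriv) (c : List ℕ → Option (List ℕ)),
    D.seqAt [] = some S ∧ D.Finite ∧ CompanionCond D c ∧ FullCompanion D c ∧
    GTC (D.unfoldRule c)

/-! ### Unwindings and capped unwindings -/

/-- A sequent that can be closed by weakenings leading to (⊥) or an axiom. -/
def closable (S : Sequent) : Prop :=
  (∃ x, SeqElem.lab x PDLFormula.bot ∈ S.ant) ∨ ∃ A, A ∈ S.ant ∧ A ∈ S.suc

/-- The subtree rooted at `p` is a finite closed derivation using only weakening rules,
(Ax) and (⊥). -/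
def ClosingSubtreeAt (D : Deriv) (p : List ℕ) : Prop :=
  (∀ q r, D.ruleAt (p ++ q) = some r → RuleApp.isClosing r) ∧
  (∀ q, D.openAt (p ++ q) = none) ∧
  { q | (D.node (p ++ q)).isSome }.Finite

/-- One application of the validity-preserving weakenings of Lemma (Valid Weakenings):
(1) remove a consequent relational atom not occurring in the antecedent;
(2) remove a consequent labelled atomic proposition `x : p` from a normal sequent with
    `x ∉ starred Δ`;
(3) remove an antecedent labelled formula `x : φ` from a normal sequent with `x ∉ labs Δ`;
(4) remove an antecedent relational atom `x →a y` from a normal sequent in which all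
    antecedent labelled formulas have their label in `labs Δ`, `x ∉ labs Δ` and `x` is not
    reachable in `Γ` from any label of `Δ`. -/
inductive VPW : Sequent → Sequent → Prop
  | relRight (Γ Δ : Finset SeqElem) (x z : Label) (a : ℕ) :
      SeqElem.rel x a z ∉ Γ → SeqElem.rel x a z ∉ Δ →
      VPW ⟨Γ, insert (SeqElem.rel x a z) Δ⟩ ⟨Γ, Δ⟩
  | atomRight (Γ Δ : Finset SeqElem) (x : Label) (p : ℕ) :
      NormalSeq ⟨Γ, insert (SeqElem.lab x (PDLFormula.atom p)) Δ⟩ →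
      SeqElem.lab x (PDLFormula.atom p) ∉ Δ → x ∉ starred Δ →
      VPW ⟨Γ, insert (SeqElem.lab x (PDLFormula.atom p)) Δ⟩ ⟨Γ, Δ⟩
  | labLeft (Γ Δ : Finset SeqElem) (x : Label) (φ : PDLFormula) :
      NormalSeq ⟨insert (SeqElem.lab x φ) Γ, Δ⟩ →
      SeqElem.lab x φ ∉ Γ → x ∉ labs Δ →
      VPW ⟨insert (SeqElem.lab x φ) Γ, Δ⟩ ⟨Γ, Δ⟩
  | relLeft (Γ Δ : Finset SeqElem) (x y : Label) (a : ℕ) :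
      NormalSeq ⟨insert (SeqElem.rel x a y) Γ, Δ⟩ →
      SeqElem.rel x a y ∉ Γ →
      (∀ z φ, SeqElem.lab z φ ∈ Γ → z ∈ labs Δ) → x ∉ labs Δ →
      (∀ z ∈ labs Δ, ¬ reaches Γ z x) →
      VPW ⟨insert (SeqElem.rel x a y) Γ, Δ⟩ ⟨Γ, Δ⟩

/-- The subtree rooted at `p` is a chain of validity-preserving weakenings, exhaustively
applied, ending at an open leaf to which no further such weakening applies. -/
def WeakCapAt (D : Deriv) (p : List ℕ) (S : Sequent) : Prop :=
  D.seqAt p = some S ∧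
  ∃ n : ℕ,
    (∀ k, k < n → ∃ r S₂, D.node (p ++ List.replicate k 0) = some (Sum.inl r) ∧
        RuleApp.isWeak r ∧ RuleApp.prems r = [S₂] ∧ VPW (RuleApp.conc r) S₂) ∧
    (∃ S', D.node (p ++ List.replicate n 0) = some (Sum.inr S') ∧ ∀ T, ¬ VPW S' T) ∧
    (∀ q, (D.node (p ++ q)).isSome → ∃ k, k ≤ n ∧ q = List.replicate k 0)

/-- In the derivation `D`, no trace covering a (sub-)path progresses more than once. -/
def OnceProgress (D : Deriv) : Prop :=
  ∀ base tail tr, CoversFrom D base tail tr →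
    ∀ i j, ProgAtFrom D base tail tr i → ProgAtFrom D base tail tr j → i = j

/-- Extending the derivation `D` at the node `base ++ tail` with the rule instance `r`
(towards its `k`-th premise) would create a trace progressing more than once. -/
def ExtTraceTwice (D : Deriv) (base tail : List ℕ) (r : RuleApp) (k : ℕ) : Prop :=
  ∃ (tr : List TraceValue) (τ τ' : TraceValue),
    CoversFrom D base tail tr ∧ tr.getLast? = some τ ∧ RuleApp.tracePair r k τ τ' ∧
    ((∃ i j, i ≠ j ∧ ProgAtFrom D base tail tr i ∧ ProgAtFrom D base tail tr j) ∨
     (RuleApp.progressing r k τ τ' ∧ ∃ i, ProgAtFrom D base tail tr i))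

/-- An unwinding of `S`: a possibly open derivation of `S` obtained by applying left and right
logical rules as much as possible, in which no trace progresses more than once, and all rule
instances consume the active labelled formula of their conclusion but preserve relational
atoms. -/
def IsUnwinding (S : Sequent) (U : Deriv) : Prop :=
  U.seqAt [] = some S ∧
  (∀ p r, U.ruleAt p = some r → RuleApp.isLogical r ∧ RuleApp.consumes r) ∧
  OnceProgress U ∧
  ∀ p S', U.openAt p = some S' →
    ∀ r : RuleApp, RuleApp.isLogical r → RuleApp.consumes r → RuleApp.wf r →
      RuleApp.conc r = S' → RuleApp.prems r ≠ [] →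
      ∃ base tail k, base ++ tail = p ∧ k < (RuleApp.prems r).length ∧
        ExtTraceTwice U base tail r k

/-- A capped unwinding for `S`: an unwinding of `S` in which (a) all open leaves containing
`x : ⊥` on the left or a common formula on both sides have been closed by weakenings leading to
(Ax) or (⊥), and (b) the validity-preserving weakenings have been exhaustively applied to all
other open leaves. -/
def IsCappedUnwinding (S : Sequent) (C : Deriv) : Prop :=
  ∃ U : Deriv, IsUnwinding S U ∧
    (∀ p r, U.node p = some (Sum.inl r) → C.node p = some (Sum.inl r)) ∧
    (∀ p S', U.node p = some (Sum.inr S') →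
      (closable S' → C.seqAt p = some S' ∧ ClosingSubtreeAt C p) ∧
      (¬ closable S' → WeakCapAt C p S')) ∧
    (∀ p, U.node p = none →
      (∀ p₁ S', p₁ <+: p → U.node p₁ ≠ some (Sum.inr S')) → C.node p = none)


/-! ### Auxiliary lemmas -/

lemma prog_starR {r : RuleApp} {k : ℕ} {τ τ' : TraceValue}
    (h : RuleApp.progressing r k τ τ') :
    ∃ x α φ Γ Δ, r = RuleApp.starR x α φ Γ Δ := by
  cases r
  case starR x α φ Γ Δ => exact ⟨x, α, φ, Γ, Δ, rfl⟩
  all_goals exact h.elim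

lemma blocked {S : Sequent} {U : Deriv} (hU : IsUnwinding S U) {p : List ℕ} {S₀ : Sequent}
    (h : U.openAt p = some S₀)
    (r : RuleApp) (hlog : r.isLogical) (hcons : r.consumes) (hwf : r.wf)
    (hconc : r.conc = S₀) (hne : r.prems ≠ [])
    (hns : ∀ x α φ Γ Δ, r ≠ RuleApp.starR x α φ Γ Δ) : False := by
  obtain ⟨-, -, honce, hext⟩ := hU
  obtain ⟨base, tail, k, -, -, htt⟩ := hext p S₀ h r hlog hcons hwf hconc hne
  obtain ⟨tr, τ, τ', hcov, -, -, hd⟩ := htt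
  rcases hd with ⟨i, j, hij, hi, hj⟩ | ⟨hprog, -⟩
  · exact hij (honce base tail tr hcov i j hi hj)
  · obtain ⟨x, α, φ, Γ, Δ, rfl⟩ := prog_starR hprog
    exact hns _ _ _ _ _ rfl

lemma right_fact {S : Sequent} {U : Deriv} (hU : IsUnwinding S U) {p : List ℕ} {S₀ : Sequent}
    (h : U.openAt p = some S₀) :
    ∀ x φ, SeqElem.lab x φ ∈ S₀.suc → φ.isAtomic ∨ φ.isIterated := by
  intro x φ hmem
  match φ with
  | .bot => exact Or.inl trivial
  | .atom _ => exact Or.inl trivial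
  | .and φ ψ =>
    exact (blocked hU h
      (RuleApp.andR x φ ψ S₀.ant (S₀.suc.erase (SeqElem.lab x (.and φ ψ))))
      trivial (Finset.notMem_erase _ _) trivial
      (by simp [RuleApp.conc, Finset.insert_erase hmem])
      (by simp [RuleApp.prems]) (by rintro _ _ _ _ _ ⟨⟩)).elim
  | .or φ ψ =>
    exact (blocked hU h
      (RuleApp.orR x φ ψ S₀.ant (S₀.suc.erase (SeqElem.lab x (.or φ ψ))))
      trivial (Finset.notMem_erase _ _) trivial
      (by simp [RuleApp.conc, Finset.insert_erase hmem])
      (by simp [RuleApp.prems]) (by rintro _ _ _ _ _ ⟨⟩)).elim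
  | .imp φ ψ =>
    exact (blocked hU h
      (RuleApp.impR x φ ψ S₀.ant (S₀.suc.erase (SeqElem.lab x (.imp φ ψ))))
      trivial (Finset.notMem_erase _ _) trivial
      (by simp [RuleApp.conc, Finset.insert_erase hmem])
      (by simp [RuleApp.prems]) (by rintro _ _ _ _ _ ⟨⟩)).elim
  | .box (.atom a) ψ =>
    exfalso
    obtain ⟨y, hy⟩ := Infinite.exists_notMem_finset
      (labs S₀.ant ∪ labs (S₀.suc.erase (SeqElem.lab x (.box (.atom a) ψ))) ∪ {x})
    simp only [Finset.mem_union, Finset.mem_singleton, not_or] at hy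
    exact blocked hU h
      (RuleApp.boxR x a y ψ S₀.ant (S₀.suc.erase (SeqElem.lab x (.box (.atom a) ψ))))
      trivial (Finset.notMem_erase _ _) ⟨hy.1.1, hy.1.2, hy.2⟩
      (by simp [RuleApp.conc, Finset.insert_erase hmem])
      (by simp [RuleApp.prems]) (by rintro _ _ _ _ _ ⟨⟩)
  | .box (.comp α β) ψ =>
    exact (blocked hU h
      (RuleApp.compR x α β ψ S₀.ant (S₀.suc.erase (SeqElem.lab x (.box (.comp α β) ψ))))
      trivial (Finset.notMem_erase _ _) trivial
      (by simp [RuleApp.conc, Finset.insert_erase hmem])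
      (by simp [RuleApp.prems]) (by rintro _ _ _ _ _ ⟨⟩)).elim
  | .box (.choice α β) ψ =>
    exact (blocked hU h
      (RuleApp.choiceR x α β ψ S₀.ant (S₀.suc.erase (SeqElem.lab x (.box (.choice α β) ψ))))
      trivial (Finset.notMem_erase _ _) trivial
      (by simp [RuleApp.conc, Finset.insert_erase hmem])
      (by simp [RuleApp.prems]) (by rintro _ _ _ _ _ ⟨⟩)).elim
  | .box (.test φ) ψ =>
    exact (blocked hU h
      (RuleApp.testR x φ ψ S₀.ant (S₀.suc.erase (SeqElem.lab x (.box (.test φ) ψ))))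
      trivial (Finset.notMem_erase _ _) trivial
      (by simp [RuleApp.conc, Finset.insert_erase hmem])
      (by simp [RuleApp.prems]) (by rintro _ _ _ _ _ ⟨⟩)).elim
  | .box (.star α) ψ => exact Or.inr trivial

lemma left_fact {S : Sequent} {U : Deriv} (hU : IsUnwinding S U) {p : List ℕ} {S₀ : Sequent}
    (h : U.openAt p = some S₀) :
    ∀ x φ, SeqElem.lab x φ ∈ S₀.ant →
      φ.isAtomic ∨ ∃ a ψ, φ = PDLFormula.box (PDLProgram.atom a) ψ ∧
        ∀ y, SeqElem.rel x a y ∉ S₀.ant := by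
  intro x φ hmem
  match φ with
  | .bot => exact Or.inl trivial
  | .atom _ => exact Or.inl trivial
  | .and φ ψ =>
    exact (blocked hU h
      (RuleApp.andL x φ ψ (S₀.ant.erase (SeqElem.lab x (.and φ ψ))) S₀.suc)
      trivial (Finset.notMem_erase _ _) trivial
      (by simp [RuleApp.conc, Finset.insert_erase hmem])
      (by simp [RuleApp.prems]) (by rintro _ _ _ _ _ ⟨⟩)).elim
  | .or φ ψ =>
    exact (blocked hU h
      (RuleApp.orL x φ ψ (S₀.ant.erase (SeqElem.lab x (.or φ ψ))) S₀.suc)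
      trivial (Finset.notMem_erase _ _) trivial
      (by simp [RuleApp.conc, Finset.insert_erase hmem])
      (by simp [RuleApp.prems]) (by rintro _ _ _ _ _ ⟨⟩)).elim
  | .imp φ ψ =>
    exact (blocked hU h
      (RuleApp.impL x φ ψ (S₀.ant.erase (SeqElem.lab x (.imp φ ψ))) S₀.suc)
      trivial (Finset.notMem_erase _ _) trivial
      (by simp [RuleApp.conc, Finset.insert_erase hmem])
      (by simp [RuleApp.prems]) (by rintro _ _ _ _ _ ⟨⟩)).elim
  | .box (.atom a) ψ =>
    refine Or.inr ⟨a, ψ, rfl, fun y hy => ?_⟩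
    have h1 : SeqElem.rel x a y ∈ S₀.ant.erase (SeqElem.lab x (.box (.atom a) ψ)) :=
      Finset.mem_erase.2 ⟨by simp, hy⟩
    exact blocked hU h
      (RuleApp.boxL x a y ψ (S₀.ant.erase (SeqElem.lab x (.box (.atom a) ψ))) S₀.suc)
      trivial ⟨Finset.notMem_erase _ _, h1⟩ trivial
      (by simp [RuleApp.conc, Finset.insert_eq_self.2 h1, Finset.insert_erase hmem])
      (by simp [RuleApp.prems]) (by rintro _ _ _ _ _ ⟨⟩)
  | .box (.comp α β) ψ =>
    exact (blocked hU h
      (RuleApp.compL x α β ψ (S₀.ant.erase (SeqElem.lab x (.box (.comp α β) ψ))) S₀.suc)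
      trivial (Finset.notMem_erase _ _) trivial
      (by simp [RuleApp.conc, Finset.insert_erase hmem])
      (by simp [RuleApp.prems]) (by rintro _ _ _ _ _ ⟨⟩)).elim
  | .box (.choice α β) ψ =>
    exact (blocked hU h
      (RuleApp.choiceL x α β ψ (S₀.ant.erase (SeqElem.lab x (.box (.choice α β) ψ))) S₀.suc)
      trivial (Finset.notMem_erase _ _) trivial
      (by simp [RuleApp.conc, Finset.insert_erase hmem])
      (by simp [RuleApp.prems]) (by rintro _ _ _ _ _ ⟨⟩)).elim
  | .box (.test φ) ψ =>
    exact (blocked hU h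
      (RuleApp.testL x φ ψ (S₀.ant.erase (SeqElem.lab x (.box (.test φ) ψ))) S₀.suc)
      trivial (Finset.notMem_erase _ _) trivial
      (by simp [RuleApp.conc, Finset.insert_erase hmem])
      (by simp [RuleApp.prems]) (by rintro _ _ _ _ _ ⟨⟩)).elim
  | .box (.star α) ψ =>
    exact (blocked hU h
      (RuleApp.starL x α ψ (S₀.ant.erase (SeqElem.lab x (.box (.star α) ψ))) S₀.suc)
      trivial (Finset.notMem_erase _ _) trivial
      (by simp [RuleApp.conc, Finset.insert_erase hmem])
      (by simp [RuleApp.prems]) (by rintro _ _ _ _ _ ⟨⟩)).elim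

lemma VPW_subset {S T : Sequent} (h : VPW S T) : T.ant ⊆ S.ant ∧ T.suc ⊆ S.suc := by
  cases h <;> exact ⟨by simp [Finset.subset_insert, Finset.Subset.refl],
    by simp [Finset.subset_insert, Finset.Subset.refl]⟩

/-- **Every open leaf of a capped unwinding is a normal sequent.** -/
theorem capped_unwinding_leaves_normal (S : Sequent) (C : Deriv)
    (h : IsCappedUnwinding S C) :
    ∀ p S', C.openAt p = some S' → NormalSeq S' := by
  obtain ⟨U, hUw, hrule, hleaf, hnone⟩ := h
  intro p S' hopen
  have hCp : C.node p = some (Sum.inr S') := by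
    unfold Deriv.openAt at hopen
    rcases hC : C.node p with _ | (r | T) <;> rw [hC] at hopen <;> simp_all
  -- find the prefix p₁ which is an open leaf of U
  have hex : ∃ p₁ S₀, p₁ <+: p ∧ U.node p₁ = some (Sum.inr S₀) := by
    by_contra hno
    push_neg at hno
    rcases hUp : U.node p with _ | (r | T)
    · have := hnone p hUp (fun p₁ S₀ hpre => hno p₁ S₀ hpre)
      rw [this] at hCp; exact nomatch hCp
    · have := hrule p r hUp
      rw [this] at hCp
      exact nomatch hCp
    · exact hno p T List.prefix_rfl hUp
  obtain ⟨p₁, S₀, ⟨q, rfl⟩, hUp₁⟩ := hex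
  by_cases hcl : closable S₀
  · exfalso
    obtain ⟨-, hnoopen, -⟩ := ((hleaf p₁ S₀ hUp₁).1 hcl).2
    have := hnoopen q
    rw [hopen] at this
    exact nomatch this
  · -- the weak cap case
    obtain ⟨hseq, n, hchain, ⟨S₁, hleafn, hnovpw⟩, hall⟩ := (hleaf p₁ S₀ hUp₁).2 hcl
    obtain ⟨k, hkn, rfl⟩ := hall q (by rw [hCp]; rfl)
    have hkeq : k = n := by
      rcases lt_or_eq_of_le hkn with hlt | rfl
      · obtain ⟨r, S₂, hnode, -⟩ := hchain k hlt
        rw [hnode] at hCp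
        exact nomatch hCp
      · rfl
    subst hkeq
    have hS' : S₁ = S' := by
      rw [hleafn] at hCp
      exact Sum.inr.inj (Option.some.inj hCp)
    subst hS'
    -- the sequents along the weakening chain shrink
    have hsub : ∀ m, m ≤ k → ∃ T : Sequent,
        C.seqAt (p₁ ++ List.replicate m 0) = some T ∧ T.ant ⊆ S₀.ant ∧ T.suc ⊆ S₀.suc := by
      intro m
      induction m with
      | zero => intro _; exact ⟨S₀, by simpa using hseq, Finset.Subset.refl _, Finset.Subset.refl _⟩
      | succ m ih =>
        intro hm
        obtain ⟨T, hT, hTa, hTs⟩ := ih (Nat.le_of_succ_le hm)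
        obtain ⟨r, S₂, hnode, -, hprems, hvpw⟩ := hchain m (Nat.lt_of_succ_le hm)
        have hconcT : RuleApp.conc r = T := by
          unfold Deriv.seqAt at hT
          rw [hnode] at hT
          simpa [DNode.concl] using hT
        have hchild := C.children (p₁ ++ List.replicate m 0) r hnode 0
        rw [hprems] at hchild
        have haddr : (p₁ ++ List.replicate m 0) ++ [0] = p₁ ++ List.replicate (m + 1) 0 := by
          rw [List.replicate_succ', List.append_assoc]
        refine ⟨S₂, ?_, ?_, ?_⟩
        · unfold Deriv.seqAt
          rw [← haddr]
          simpa using hchild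
        · exact (VPW_subset (hconcT ▸ hvpw)).1.trans hTa
        · exact (VPW_subset (hconcT ▸ hvpw)).2.trans hTs
    obtain ⟨T, hT, hTa, hTs⟩ := hsub k le_rfl
    have hTS₁ : T = S₁ := by
      unfold Deriv.seqAt at hT
      rw [hleafn] at hT
      exact ((by simpa [DNode.concl] using hT : S₁ = T)).symm
    rw [hTS₁] at hTa hTs
    -- disjointness from non-closability
    have hdisj : ∀ A ∈ S₁.ant, A ∉ S₁.suc := by
      intro A hA hA'
      exact hcl (Or.inr ⟨A, hTa hA, hTs hA'⟩)
    have hUopen : U.openAt p₁ = some S₀ := by unfold Deriv.openAt; rw [hUp₁]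
    refine ⟨hdisj, ?_, ?_⟩
    · -- consequent: only atomic and iterated labelled formulas
      intro A hA
      match A with
      | .rel x a z =>
        exfalso
        have hmem : SeqElem.rel x a z ∈ S₁.suc := hA
        have hSeq : S₁ = ⟨S₁.ant, insert (SeqElem.rel x a z) (S₁.suc.erase (SeqElem.rel x a z))⟩ := by
          cases S₁
          simp [Finset.insert_erase hmem]
        refine hnovpw ⟨S₁.ant, S₁.suc.erase (SeqElem.rel x a z)⟩ ?_
        have hv := VPW.relRight S₁.ant (S₁.suc.erase (SeqElem.rel x a z)) x z a
          (fun hc => hdisj _ hc hmem) (Finset.notMem_erase _ _)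
        rwa [← hSeq] at hv
      | .lab x φ =>
        exact ⟨x, φ, rfl, right_fact hUw hUopen x φ (hTs hA)⟩
    · -- antecedent
      intro A hA
      match A with
      | .rel x a z => exact Or.inl trivial
      | .lab x φ =>
        rcases left_fact hUw hUopen x φ (hTa hA) with hat | ⟨a, ψ, rfl, hrel⟩
        · exact Or.inr ⟨x, φ, rfl, Or.inl hat⟩
        · exact Or.inr ⟨x, _, rfl, Or.inr ⟨a, ψ, rfl, fun y hy => hrel y (hTa hy)⟩⟩
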